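/- arXiv:1912.12091 — 3 statements merged into one kernel-verified Lean document; each statement's English description precedes it below -/
import Mathlib

section
/- Let X₁,…,Xₙ be independent random variables with finite second moments, Bₙ² = Σₖ E[Xₖ²] > 0 (here each E[Xₖ]=0 so σₖ² = E[Xₖ²]). Define Lₙ(ε) = Bₙ⁻² Σₖ E[Xₖ²·1(|Xₖ| ≥ εBₙ)] and Λₙ(ε) = Bₙ⁻³ Σₖ E[|Xₖ|³·1(|Xₖ| < εBₙ)]. Then Lₙ(1) + Λₙ(1) = inf over ε > 0 of (Lₙ(ε) + Λₙ(ε)). -/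
open MeasureTheory Set ProbabilityTheory

private lemma osipov_pt (Bn x ε : ℝ) (hBn : 0 < Bn) :
    (if 1 * Bn ≤ |x| then x ^ 2 else 0) / Bn ^ 2
      + (if |x| < 1 * Bn then |x| ^ 3 else 0) / Bn ^ 3
    ≤ (if ε * Bn ≤ |x| then x ^ 2 else 0) / Bn ^ 2
      + (if |x| < ε * Bn then |x| ^ 3 else 0) / Bn ^ 3 := by
  have hB2 : (0:ℝ) < Bn ^ 2 := by positivity
  have hB3 : (0:ℝ) < Bn ^ 3 := by positivity
  have hx2 : x ^ 2 = |x| ^ 2 := (sq_abs x).symm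
  have hxa : 0 ≤ |x| := abs_nonneg x
  rw [one_mul]
  rcases le_or_gt Bn |x| with h1 | h1 <;> rcases le_or_gt (ε * Bn) |x| with h2 | h2
  · rw [if_pos h1, if_neg (not_lt.2 h1), if_pos h2, if_neg (not_lt.2 h2)]
  · rw [if_pos h1, if_neg (not_lt.2 h1), if_neg (not_le.2 h2), if_pos h2]
    simp only [zero_div, add_zero, zero_add]
    rw [div_le_div_iff₀ hB2 hB3]
    nlinarith [mul_nonneg (mul_nonneg (sub_nonneg.2 h1) (mul_nonneg hxa hxa)) (sq_nonneg Bn)]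
  · rw [if_neg (not_le.2 h1), if_pos h1, if_pos h2, if_neg (not_lt.2 h2)]
    simp only [zero_div, add_zero, zero_add]
    rw [div_le_div_iff₀ hB3 hB2]
    nlinarith [mul_nonneg (mul_nonneg (sub_nonneg.2 h1.le) (mul_nonneg hxa hxa)) (sq_nonneg Bn)]
  · rw [if_neg (not_le.2 h1), if_pos h1, if_neg (not_le.2 h2), if_pos h2]

/-- For independent mean-zero r.v.'s with finite second moments, the sum
`Lₙ(1) + Λₙ(1)` is the infimum over `ε > 0` of `Lₙ(ε) + Λₙ(ε)`, where
`Lₙ` is the Lindeberg fraction and `Λₙ` the normalized truncated third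
absolute moments. -/
theorem osipov_infimum_at_one {Ω : Type*} [MeasureSpace Ω]
    [IsProbabilityMeasure (ℙ : Measure Ω)]
    {n : ℕ} (X : Fin n → Ω → ℝ) (hmeas : ∀ k, Measurable (X k))
    (hindep : iIndepFun X ℙ)
    (hint : ∀ k, Integrable fun ω => (X k ω) ^ 2)
    (hmean : ∀ k, (∫ ω, X k ω) = 0)
    (Bn : ℝ) (hBn : 0 < Bn) (hBdef : Bn ^ 2 = ∑ k, ∫ ω, (X k ω) ^ 2)
    (L Λ : ℝ → ℝ)
    (hL : ∀ ε, L ε = (∑ k, ∫ ω, if ε * Bn ≤ |X k ω| then (X k ω) ^ 2 else 0) / Bn ^ 2)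
    (hΛ : ∀ ε, Λ ε = (∑ k, ∫ ω, if |X k ω| < ε * Bn then |X k ω| ^ 3 else 0) / Bn ^ 3) :
    L 1 + Λ 1 = sInf ((fun ε => L ε + Λ ε) '' Ioi 0) := by
  have hA : ∀ (ε : ℝ) (k : Fin n),
      Integrable (fun ω => if ε * Bn ≤ |X k ω| then (X k ω) ^ 2 else 0) := by
    intro ε k
    refine (hint k).mono' ?_ ?_
    · exact (Measurable.ite (measurableSet_le measurable_const (hmeas k).abs)
        ((hmeas k).pow_const 2) measurable_const).aestronglyMeasurable
    · filter_upwards with ω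
      split_ifs <;> simp [abs_of_nonneg (sq_nonneg (X k ω)), sq_nonneg (X k ω)]
  have hC : ∀ (ε : ℝ), 0 < ε → ∀ (k : Fin n),
      Integrable (fun ω => if |X k ω| < ε * Bn then |X k ω| ^ 3 else 0) := by
    intro ε hε k
    refine (((hint k).const_mul (ε * Bn)).mono' ?_ ?_)
    · exact (Measurable.ite (measurableSet_lt (hmeas k).abs measurable_const)
        ((hmeas k).abs.pow_const 3) measurable_const).aestronglyMeasurable
    · filter_upwards with ω
      have hx : 0 ≤ |X k ω| := abs_nonneg _
      rw [Real.norm_eq_abs]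
      split_ifs with h
      · rw [abs_pow, abs_abs]
        nlinarith [sq_abs (X k ω), mul_nonneg hx hx,
          mul_nonneg (sub_nonneg.2 h.le) (mul_nonneg hx hx)]
      · rw [abs_zero]
        positivity
  -- combined function
  have hFeq : ∀ ε : ℝ, 0 < ε → L ε + Λ ε =
      ∑ k, ∫ ω, ((if ε * Bn ≤ |X k ω| then (X k ω) ^ 2 else 0) / Bn ^ 2
        + (if |X k ω| < ε * Bn then |X k ω| ^ 3 else 0) / Bn ^ 3) := by
    intro ε hε
    rw [hL, hΛ, Finset.sum_div, Finset.sum_div, ← Finset.sum_add_distrib]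
    refine Finset.sum_congr rfl fun k _ => ?_
    rw [integral_add ((hA ε k).div_const _) ((hC ε hε k).div_const _),
      integral_div, integral_div]
  have key : ∀ ε : ℝ, 0 < ε → L 1 + Λ 1 ≤ L ε + Λ ε := by
    intro ε hε
    rw [hFeq 1 one_pos, hFeq ε hε]
    refine Finset.sum_le_sum fun k _ => ?_
    refine integral_mono (((hA 1 k).div_const _).add ((hC 1 one_pos k).div_const _))
      (((hA ε k).div_const _).add ((hC ε hε k).div_const _)) fun ω => ?_
    exact osipov_pt Bn (X k ω) ε hBn
  have hmem : L 1 + Λ 1 ∈ (fun ε => L ε + Λ ε) '' Ioi 0 := ⟨1, Set.mem_Ioi.2 one_pos, rfl⟩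
  refine le_antisymm ?_ (csInf_le ⟨L 1 + Λ 1, ?_⟩ hmem)
  · exact le_csInf ⟨_, hmem⟩ (by rintro b ⟨ε, hε, rfl⟩; exact key ε hε)
  · rintro b ⟨ε, hε, rfl⟩; exact key ε hε
end

section
/- With g₁(z) = max{z, Bₙ} and the Esseen-type fraction L_{E,n}(g,ε,γ) = sup_{0<z<ε} (g(zBₙ)/(z·g(Bₙ)))·(γ·|Mₙ(z)| + z·Lₙ(z)), one has 1 ≤ L_{E,n}(g₁,ε,γ) ≤ max{ε,1}·max{γ,1} for all ε > 0 and γ > 0. -/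
open ProbabilityTheory MeasureTheory Set

/-- With `g₁(z) = max{z, Bₙ}`, the Esseen-type fraction satisfies
`1 ≤ L_{E,n}(g₁,ε,γ) ≤ max{ε,1}·max{γ,1}` for all `ε, γ > 0`. -/
theorem esseen_fraction_g1_bounds {Ω : Type*} [MeasureSpace Ω]
    [IsProbabilityMeasure (ℙ : Measure Ω)]
    {n : ℕ} (X : Fin n → Ω → ℝ) (hmeas : ∀ k, Measurable (X k))
    (hint : ∀ k, Integrable fun ω => (X k ω) ^ 2)
    (hmean : ∀ k, (∫ ω, X k ω) = 0)
    (Bn : ℝ) (hBn : 0 < Bn) (hBdef : Bn ^ 2 = ∑ k, ∫ ω, (X k ω) ^ 2)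
    (M L : ℝ → ℝ)
    (hM : ∀ z, M z = (∑ k, ∫ ω, if |X k ω| < z * Bn then (X k ω) ^ 3 else 0) / Bn ^ 3)
    (hL : ∀ z, L z = (∑ k, ∫ ω, if z * Bn ≤ |X k ω| then (X k ω) ^ 2 else 0) / Bn ^ 2)
    (g₁ : ℝ → ℝ) (hg₁ : ∀ z, g₁ z = max z Bn)
    (ε γ : ℝ) (hε : 0 < ε) (hγ : 0 < γ) :
    1 ≤ sSup ((fun z => g₁ (z * Bn) / (z * g₁ Bn) * (γ * |M z| + z * L z)) '' Ioo 0 ε) ∧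
    sSup ((fun z => g₁ (z * Bn) / (z * g₁ Bn) * (γ * |M z| + z * L z)) '' Ioo 0 ε) ≤
      max ε 1 * max γ 1 := by
  have hBn2 : (0:ℝ) < Bn ^ 2 := by positivity
  set f : ℝ → ℝ := fun z => g₁ (z * Bn) / (z * g₁ Bn) * (γ * |M z| + z * L z) with hfdef
  have key : ∀ z ∈ Ioo (0:ℝ) ε, (1 - (n:ℝ) * z ^ 2 ≤ f z) ∧ f z ≤ max ε 1 * max γ 1 := by
    intro z hz
    obtain ⟨hz0, hzε⟩ := hz
    have hc0 : 0 < z * Bn := mul_pos hz0 hBn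
    have hms : ∀ k, MeasurableSet {ω | |X k ω| < z * Bn} :=
      fun k => measurableSet_lt ((hmeas k).abs) measurable_const
    -- integrability
    have i2lt : ∀ k, Integrable (fun ω => if |X k ω| < z * Bn then (X k ω) ^ 2 else 0) := by
      intro k
      refine (hint k).mono' (Measurable.ite (hms k) ((hmeas k).pow_const 2)
        measurable_const).aestronglyMeasurable ?_
      filter_upwards with ω
      by_cases h : |X k ω| < z * Bn <;> simp [h, abs_of_nonneg (sq_nonneg (X k ω))] <;> positivity
    have i2ge : ∀ k, Integrable (fun ω => if z * Bn ≤ |X k ω| then (X k ω) ^ 2 else 0) := by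
      intro k
      have hms' : MeasurableSet {ω | z * Bn ≤ |X k ω|} :=
        measurableSet_le measurable_const ((hmeas k).abs)
      refine (hint k).mono' (Measurable.ite hms' ((hmeas k).pow_const 2)
        measurable_const).aestronglyMeasurable ?_
      filter_upwards with ω
      by_cases h : z * Bn ≤ |X k ω| <;> simp [h, abs_of_nonneg (sq_nonneg (X k ω))] <;> positivity
    have i3lt : ∀ k, Integrable (fun ω => if |X k ω| < z * Bn then (X k ω) ^ 3 else 0) := by
      intro k
      refine ((hint k).const_mul (z * Bn)).mono' (Measurable.ite (hms k)
        ((hmeas k).pow_const 3) measurable_const).aestronglyMeasurable ?_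
      filter_upwards with ω
      by_cases h : |X k ω| < z * Bn
      · simp only [h, if_true, Real.norm_eq_abs]
        rw [abs_pow]
        nlinarith [sq_abs (X k ω), abs_nonneg (X k ω), h.le]
      · simp only [h, if_false, norm_zero]
        positivity
    set A : ℝ := ∑ k, ∫ ω, if |X k ω| < z * Bn then (X k ω) ^ 2 else 0 with hA
    set Bz : ℝ := ∑ k, ∫ ω, if z * Bn ≤ |X k ω| then (X k ω) ^ 2 else 0 with hBz
    set T : ℝ := ∑ k, ∫ ω, if |X k ω| < z * Bn then (X k ω) ^ 3 else 0 with hT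
    clear_value A Bz T
    have hAB : A + Bz = Bn ^ 2 := by
      rw [hA, hBz, hBdef, ← Finset.sum_add_distrib]
      refine Finset.sum_congr rfl fun k _ => ?_
      rw [← integral_add (i2lt k) (i2ge k)]
      refine integral_congr_ae (Filter.Eventually.of_forall fun ω => ?_)
      by_cases h : |X k ω| < z * Bn
      · simp [h, not_le.mpr h]
      · simp [h, not_lt.mp h]
    have hA0 : 0 ≤ A := by
      rw [hA]
      refine Finset.sum_nonneg fun k _ => integral_nonneg fun ω => ?_
      by_cases h : |X k ω| < z * Bn <;> simp [h] <;> positivity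
    have hB0 : 0 ≤ Bz := by
      rw [hBz]
      refine Finset.sum_nonneg fun k _ => integral_nonneg fun ω => ?_
      by_cases h : z * Bn ≤ |X k ω| <;> simp [h] <;> positivity
    have hAle : A ≤ (n:ℝ) * (z * Bn) ^ 2 := by
      have : ∀ k : Fin n, (∫ ω, if |X k ω| < z * Bn then (X k ω) ^ 2 else 0)
          ≤ (z * Bn) ^ 2 := by
        intro k
        calc (∫ ω, if |X k ω| < z * Bn then (X k ω) ^ 2 else 0)
            ≤ ∫ _ : Ω, (z * Bn) ^ 2 := by
              refine integral_mono (i2lt k) (integrable_const _) fun ω => ?_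
              by_cases h : |X k ω| < z * Bn
              · simp only [h, if_true]
                calc (X k ω) ^ 2 = |X k ω| ^ 2 := (sq_abs _).symm
                  _ ≤ (z * Bn) ^ 2 := by
                      exact pow_le_pow_left₀ (abs_nonneg _) h.le 2
              · simp only [h, if_false]; positivity
          _ = (z * Bn) ^ 2 := by simp
      rw [hA]
      calc (∑ k, ∫ ω, if |X k ω| < z * Bn then (X k ω) ^ 2 else 0)
          ≤ ∑ _k : Fin n, (z * Bn) ^ 2 := Finset.sum_le_sum fun k _ => this k
        _ = (n:ℝ) * (z * Bn) ^ 2 := by simp [mul_comm]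
    have hTle : |T| ≤ z * Bn * A := by
      rw [hT, hA]
      calc |∑ k, ∫ ω, if |X k ω| < z * Bn then (X k ω) ^ 3 else 0| ≤ ∑ k, |∫ ω, if |X k ω| < z * Bn then (X k ω) ^ 3 else 0| :=
            Finset.abs_sum_le_sum_abs _ _
        _ ≤ ∑ k, ∫ ω, (z * Bn) * (if |X k ω| < z * Bn then (X k ω) ^ 2 else 0) := by
            refine Finset.sum_le_sum fun k _ => ?_
            have hni := norm_integral_le_integral_norm
              (μ := (ℙ : Measure Ω)) (fun ω => if |X k ω| < z * Bn then (X k ω) ^ 3 else 0)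
            simp only [Real.norm_eq_abs] at hni
            refine hni.trans ?_
            refine integral_mono ((i3lt k).abs) ((i2lt k).const_mul _) fun ω => ?_
            by_cases h : |X k ω| < z * Bn
            · simp only [h, if_true]
              rw [abs_pow]
              nlinarith [sq_abs (X k ω), abs_nonneg (X k ω), h.le]
            · simp [h]
        _ = z * Bn * ∑ k, ∫ ω, if |X k ω| < z * Bn then (X k ω) ^ 2 else 0 := by
            rw [Finset.mul_sum]
            refine Finset.sum_congr rfl fun k _ => ?_
            rw [integral_const_mul]
    -- key quantities
    have hMz : |M z| ≤ z * A / Bn ^ 2 := by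
      rw [hM z, ← hT, abs_div, abs_of_pos (by positivity : (0:ℝ) < Bn ^ 3)]
      rw [div_le_div_iff₀ (by positivity) hBn2]
      calc |T| * Bn ^ 2 ≤ (z * Bn * A) * Bn ^ 2 :=
            mul_le_mul_of_nonneg_right hTle (le_of_lt hBn2)
        _ = z * A * Bn ^ 3 := by ring
    have hLz : L z = Bz / Bn ^ 2 := by rw [hL z, ← hBz]
    have hLz0 : 0 ≤ L z := by rw [hLz]; exact div_nonneg hB0 hBn2.le
    -- the ratio
    have hg1Bn : g₁ Bn = Bn := by rw [hg₁]; exact max_self Bn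
    have hratio : g₁ (z * Bn) / (z * g₁ Bn) = max z 1 / z := by
      rw [hg₁, hg1Bn]
      have h1 : max (z * Bn) Bn = max z 1 * Bn := by
        rw [max_mul_of_nonneg _ _ hBn.le, one_mul]
      rw [h1, mul_comm z Bn, ← mul_div_mul_left (max z 1) z (ne_of_gt hBn)]
      ring_nf
    have hmax1 : (1:ℝ) ≤ max z 1 := le_max_right _ _
    have hmaxz : z ≤ max z 1 := le_max_left _ _
    constructor
    · -- lower bound
      have hLlow : 1 - (n:ℝ) * z ^ 2 ≤ L z := by
        rw [hLz]
        rw [le_div_iff₀ hBn2]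
        have : Bn ^ 2 - (n:ℝ) * (z * Bn) ^ 2 ≤ Bz := by linarith [hAle, hAB]
        nlinarith [this]
      have h1 : f z = max z 1 / z * (γ * |M z| + z * L z) := by
        rw [hfdef]; simp only []; rw [hratio]
      rw [h1]
      have h2 : max z 1 / z * (z * L z) ≤ max z 1 / z * (γ * |M z| + z * L z) := by
        have : 0 ≤ γ * |M z| := by positivity
        have hr0 : 0 ≤ max z 1 / z := by positivity
        nlinarith
      have h3 : max z 1 / z * (z * L z) = max z 1 * L z := by
        field_simp
      calc 1 - (n:ℝ) * z ^ 2 ≤ L z := hLlow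
        _ = 1 * L z := (one_mul _).symm
        _ ≤ max z 1 * L z := mul_le_mul_of_nonneg_right hmax1 hLz0
        _ = max z 1 / z * (z * L z) := h3.symm
        _ ≤ max z 1 / z * (γ * |M z| + z * L z) := h2
    · -- upper bound
      set G := max γ 1 with hG
      have hγG : γ ≤ G := le_max_left _ _
      have h1G : (1:ℝ) ≤ G := le_max_right _ _
      have hsum : γ * |M z| + z * L z ≤ G * z := by
        have h1 : γ * |M z| ≤ G * (z * A / Bn ^ 2) := by
          have : γ * |M z| ≤ G * |M z| :=
            mul_le_mul_of_nonneg_right hγG (abs_nonneg _)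
          refine this.trans (mul_le_mul_of_nonneg_left hMz (by linarith))
        have h2 : z * L z ≤ G * (z * Bz / Bn ^ 2) := by
          rw [hLz]
          calc z * (Bz / Bn ^ 2) = 1 * (z * Bz / Bn ^ 2) := by ring
            _ ≤ G * (z * Bz / Bn ^ 2) :=
              mul_le_mul_of_nonneg_right h1G (div_nonneg (mul_nonneg hz0.le hB0) hBn2.le)
        have h3 : G * (z * A / Bn ^ 2) + G * (z * Bz / Bn ^ 2) = G * z := by
          have he : G * (z * A / Bn ^ 2) + G * (z * Bz / Bn ^ 2)
              = G * z * (A + Bz) / Bn ^ 2 := by ring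
          rw [he, hAB, mul_div_assoc, div_self (ne_of_gt hBn2), mul_one]
        linarith
      have hfz : f z = max z 1 / z * (γ * |M z| + z * L z) := by
        rw [hfdef]; simp only []; rw [hratio]
      rw [hfz]
      have hr0 : 0 ≤ max z 1 / z := by positivity
      calc max z 1 / z * (γ * |M z| + z * L z) ≤ max z 1 / z * (G * z) :=
            mul_le_mul_of_nonneg_left hsum hr0
        _ = max z 1 * G := by field_simp
        _ ≤ max ε 1 * G := by
            refine mul_le_mul_of_nonneg_right ?_ (by linarith)
            exact max_le_max hzε.le le_rfl
        _ = max ε 1 * max γ 1 := rfl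
  -- assemble
  have hmem : ε / 2 ∈ Ioo (0:ℝ) ε := ⟨half_pos hε, half_lt_self hε⟩
  have hne : (f '' Ioo 0 ε).Nonempty := ⟨f (ε/2), mem_image_of_mem f hmem⟩
  have hbdd : BddAbove (f '' Ioo 0 ε) := by
    refine ⟨max ε 1 * max γ 1, ?_⟩
    rintro _ ⟨z, hz, rfl⟩
    exact (key z hz).2
  constructor
  · rw [le_csSup_iff hbdd hne]
    intro b hb
    have hev : ∀ᶠ z in nhdsWithin 0 (Ioi 0), 1 - (n:ℝ) * z ^ 2 ≤ b := by
      filter_upwards [Ioo_mem_nhdsGT_of_mem (by constructor <;> simp [hε] : (0:ℝ) ∈ Ico 0 ε)]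
        with z hz
      exact le_trans (key z hz).1 (hb (mem_image_of_mem f hz))
    have htend : Filter.Tendsto (fun z : ℝ => 1 - (n:ℝ) * z ^ 2)
        (nhdsWithin 0 (Ioi 0)) (nhds 1) := by
      have : Filter.Tendsto (fun z : ℝ => 1 - (n:ℝ) * z ^ 2) (nhds 0) (nhds 1) := by
        have hc : Continuous fun z : ℝ => 1 - (n:ℝ) * z ^ 2 :=
          continuous_const.sub (continuous_const.mul (continuous_pow 2))
        have h0 : (1:ℝ) - (n:ℝ) * (0:ℝ) ^ 2 = 1 := by norm_num
        have := hc.tendsto (0:ℝ)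
        rw [h0] at this
        exact this
      exact this.mono_left nhdsWithin_le_nhds
    exact le_of_tendsto htend hev
  · exact csSup_le hne (by rintro _ ⟨z, hz, rfl⟩; exact (key z hz).2)
end

section
/- With g₁(z) = max{z, Bₙ} and the Rozovskii-type fraction L_{R,n}(g,ε,γ) = γ·(g(εBₙ)/(ε·g(Bₙ)))·|Mₙ(ε)| + sup_{0<z<ε} (g(zBₙ)/g(Bₙ))·Lₙ(z), one has 1 ≤ L_{R,n}(g₁,ε,γ) ≤ max{ε,1}·(γ+1) for all ε > 0 and γ > 0. -/
open ProbabilityTheory MeasureTheory Set Filter Topology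

/-- With `g₁(z) = max{z, Bₙ}`, the Rozovskii-type fraction satisfies
`1 ≤ L_{R,n}(g₁,ε,γ) ≤ max{ε,1}·(γ+1)` for all `ε, γ > 0`. -/
theorem rozovskii_fraction_g1_bounds {Ω : Type*} [MeasureSpace Ω]
    [IsProbabilityMeasure (ℙ : Measure Ω)]
    {n : ℕ} (X : Fin n → Ω → ℝ) (hmeas : ∀ k, Measurable (X k))
    (hint : ∀ k, Integrable fun ω => (X k ω) ^ 2)
    (hmean : ∀ k, (∫ ω, X k ω) = 0)
    (Bn : ℝ) (hBn : 0 < Bn) (hBdef : Bn ^ 2 = ∑ k, ∫ ω, (X k ω) ^ 2)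
    (M L : ℝ → ℝ)
    (hM : ∀ z, M z = (∑ k, ∫ ω, if |X k ω| < z * Bn then (X k ω) ^ 3 else 0) / Bn ^ 3)
    (hL : ∀ z, L z = (∑ k, ∫ ω, if z * Bn ≤ |X k ω| then (X k ω) ^ 2 else 0) / Bn ^ 2)
    (g₁ : ℝ → ℝ) (hg₁ : ∀ z, g₁ z = max z Bn)
    (ε γ : ℝ) (hε : 0 < ε) (hγ : 0 < γ) :
    1 ≤ γ * (g₁ (ε * Bn) / (ε * g₁ Bn)) * |M ε| +
          sSup ((fun z => g₁ (z * Bn) / g₁ Bn * L z) '' Ioo 0 ε) ∧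
    γ * (g₁ (ε * Bn) / (ε * g₁ Bn)) * |M ε| +
          sSup ((fun z => g₁ (z * Bn) / g₁ Bn * L z) '' Ioo 0 ε) ≤
      max ε 1 * (γ + 1) := by
  have hBn2 : (0:ℝ) < Bn ^ 2 := by positivity
  -- measurability and integrability of truncated squares
  have hmeasf : ∀ (z : ℝ) (k : Fin n),
      Measurable (fun ω => if z * Bn ≤ |X k ω| then (X k ω) ^ 2 else 0) := by
    intro z k
    exact Measurable.ite (measurableSet_le measurable_const (hmeas k).abs)
      ((hmeas k).pow_const 2) measurable_const
  have hintf : ∀ (z : ℝ) (k : Fin n),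
      Integrable (fun ω => if z * Bn ≤ |X k ω| then (X k ω) ^ 2 else 0) := by
    intro z k
    refine (hint k).mono' (hmeasf z k).aestronglyMeasurable ?_
    filter_upwards with ω
    by_cases h : z * Bn ≤ |X k ω|
    · simp [h, Real.norm_eq_abs, abs_of_nonneg (sq_nonneg (X k ω))]
    · simp [h, sq_nonneg]
  -- L is nonnegative and at most 1
  have hLnonneg : ∀ z, 0 ≤ L z := by
    intro z
    rw [hL]
    apply div_nonneg _ hBn2.le
    apply Finset.sum_nonneg
    intro k _
    apply integral_nonneg
    intro ω
    by_cases h : z * Bn ≤ |X k ω| <;> simp [h, sq_nonneg]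
  have hLle : ∀ z, L z ≤ 1 := by
    intro z
    rw [hL, div_le_one hBn2, hBdef]
    apply Finset.sum_le_sum
    intro k _
    apply integral_mono (hintf z k) (hint k)
    intro ω
    by_cases h : z * Bn ≤ |X k ω| <;> simp [h, sq_nonneg]
  -- |M ε| ≤ ε
  have hintf3 : ∀ (k : Fin n),
      Integrable (fun ω => if |X k ω| < ε * Bn then (X k ω) ^ 3 else 0) := by
    intro k
    refine Integrable.mono' ((hint k).const_mul (ε * Bn)) ?_ ?_
    · exact (Measurable.ite (measurableSet_lt (hmeas k).abs measurable_const)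
        ((hmeas k).pow_const 3) measurable_const).aestronglyMeasurable
    · filter_upwards with ω
      by_cases h : |X k ω| < ε * Bn
      · simp only [h, if_true, Real.norm_eq_abs]
        calc |(X k ω) ^ 3| = |X k ω| * (X k ω) ^ 2 := by
              rw [abs_pow, ← sq_abs (X k ω)]; ring
          _ ≤ ε * Bn * (X k ω) ^ 2 := by
              apply mul_le_mul_of_nonneg_right h.le (sq_nonneg _)
      · simp only [h, if_false, norm_zero]
        positivity
  have hMle : |M ε| ≤ ε := by
    rw [hM, abs_div, abs_of_pos (by positivity : (0:ℝ) < Bn ^ 3),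
      div_le_iff₀ (by positivity : (0:ℝ) < Bn ^ 3)]
    calc |∑ k, ∫ ω, if |X k ω| < ε * Bn then (X k ω) ^ 3 else 0|
        ≤ ∑ k, |∫ ω, if |X k ω| < ε * Bn then (X k ω) ^ 3 else 0| :=
          Finset.abs_sum_le_sum_abs _ _
      _ ≤ ∑ k, ∫ ω, ε * Bn * (X k ω) ^ 2 := by
          apply Finset.sum_le_sum
          intro k _
          calc |∫ ω, if |X k ω| < ε * Bn then (X k ω) ^ 3 else 0|
              = ‖∫ ω, if |X k ω| < ε * Bn then (X k ω) ^ 3 else 0‖ :=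
                (Real.norm_eq_abs _).symm
            _ ≤ ∫ ω, ‖if |X k ω| < ε * Bn then (X k ω) ^ 3 else 0‖ :=
                norm_integral_le_integral_norm _
            _ ≤ ∫ ω, ε * Bn * (X k ω) ^ 2 := ?_
          simp only [Real.norm_eq_abs]
          apply integral_mono (hintf3 k).abs ((hint k).const_mul (ε * Bn))
          intro ω
          by_cases h : |X k ω| < ε * Bn
          · simp only [h, if_true]
            calc |(X k ω) ^ 3| = |X k ω| * (X k ω) ^ 2 := by
                  rw [abs_pow, ← sq_abs (X k ω)]; ring
              _ ≤ ε * Bn * (X k ω) ^ 2 := mul_le_mul_of_nonneg_right h.le (sq_nonneg _)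
          · simp only [h, if_false, abs_zero]
            positivity
      _ = ε * Bn ^ 3 := by
          simp only [integral_const_mul]
          rw [← Finset.mul_sum, ← hBdef]
          ring
  -- value of g₁
  have hg₁Bn : g₁ Bn = Bn := by rw [hg₁]; exact max_self Bn
  have hg₁z : ∀ z : ℝ, g₁ (z * Bn) = max z 1 * Bn := by
    intro z
    rw [hg₁]
    rw [max_mul_of_nonneg z 1 hBn.le]
    simp
  -- the set and its bounds
  set S := (fun z => g₁ (z * Bn) / g₁ Bn * L z) '' Ioo 0 ε with hS
  have hSub : ∀ x ∈ S, x ≤ max ε 1 := by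
    rintro x ⟨z, hz, rfl⟩
    simp only [hg₁z, hg₁Bn]
    rw [mul_div_assoc, div_self hBn.ne', mul_one]
    calc max z 1 * L z ≤ max ε 1 * 1 := by
          apply mul_le_mul _ (hLle z) (hLnonneg z) (le_trans zero_le_one (le_max_right ε 1))
          exact max_le_max hz.2.le le_rfl
      _ = max ε 1 := mul_one _
  have hSbdd : BddAbove S := ⟨max ε 1, hSub⟩
  -- sequence tending to 0
  set z : ℕ → ℝ := fun m => ε / (m + 2) with hzdef
  have hzpos : ∀ m, 0 < z m := fun m => by positivity
  have hzlt : ∀ m, z m < ε := by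
    intro m
    rw [hzdef]
    rw [div_lt_iff₀ (by positivity)]
    nlinarith [Nat.cast_nonneg (α := ℝ) m, hε]
  have hztend : Tendsto z atTop (𝓝 0) := by
    apply Tendsto.div_atTop (tendsto_const_nhds)
    exact tendsto_atTop_add_const_right _ 2 tendsto_natCast_atTop_atTop
  have hzBtend : Tendsto (fun m => z m * Bn) atTop (𝓝 0) := by
    simpa using hztend.mul_const Bn
  -- L (z m) → 1
  have hInt_tend : ∀ k : Fin n,
      Tendsto (fun m => ∫ ω, if z m * Bn ≤ |X k ω| then (X k ω) ^ 2 else 0) atTop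
        (𝓝 (∫ ω, (X k ω) ^ 2)) := by
    intro k
    apply tendsto_integral_of_dominated_convergence (fun ω => (X k ω) ^ 2)
      (fun m => (hmeasf (z m) k).aestronglyMeasurable) (hint k)
    · intro m
      filter_upwards with ω
      by_cases h : z m * Bn ≤ |X k ω|
      · simp [h, Real.norm_eq_abs, abs_of_nonneg (sq_nonneg (X k ω))]
      · simp [h, sq_nonneg]
    · filter_upwards with ω
      by_cases hx : X k ω = 0
      · have h0 : ∀ m, ¬ (z m * Bn ≤ |X k ω|) := by
          intro m
          rw [hx, abs_zero, not_le]
          exact mul_pos (hzpos m) hBn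
        have heq : (fun m => if z m * Bn ≤ |X k ω| then (X k ω) ^ 2 else 0)
            = fun _ => (0:ℝ) := by
          funext m; rw [if_neg (h0 m)]
        rw [heq, hx]
        simpa using (tendsto_const_nhds : Tendsto (fun _ : ℕ => (0:ℝ)) atTop (𝓝 0))
      · have hxpos : 0 < |X k ω| := abs_pos.mpr hx
        have hev : ∀ᶠ m in atTop, z m * Bn < |X k ω| :=
          hzBtend.eventually_lt_const hxpos
        apply tendsto_const_nhds.congr'
        filter_upwards [hev] with m hm
        rw [if_pos hm.le]
  have hLtend : Tendsto (fun m => L (z m)) atTop (𝓝 1) := by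
    have hsum : Tendsto
        (fun m => ∑ k, ∫ ω, if z m * Bn ≤ |X k ω| then (X k ω) ^ 2 else 0) atTop
        (𝓝 (∑ k, ∫ ω, (X k ω) ^ 2)) :=
      tendsto_finset_sum _ (fun k _ => hInt_tend k)
    have := hsum.div_const (Bn ^ 2)
    rw [← hBdef, div_self hBn2.ne'] at this
    refine this.congr ?_
    intro m
    rw [hL]
  -- 1 ≤ sSup S
  have hsup_ge : 1 ≤ sSup S := by
    apply le_of_tendsto hLtend
    filter_upwards with m
    have hmem : g₁ (z m * Bn) / g₁ Bn * L (z m) ∈ S :=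
      ⟨z m, ⟨hzpos m, hzlt m⟩, rfl⟩
    have : L (z m) ≤ g₁ (z m * Bn) / g₁ Bn * L (z m) := by
      rw [hg₁z, hg₁Bn, mul_div_assoc, div_self hBn.ne', mul_one]
      nth_rewrite 1 [← one_mul (L (z m))]
      exact mul_le_mul_of_nonneg_right (le_max_right _ _) (hLnonneg _)
    exact this.trans (le_csSup hSbdd hmem)
  -- rewrite first term
  have hterm1 : γ * (g₁ (ε * Bn) / (ε * g₁ Bn)) * |M ε| = γ * (max ε 1 / ε) * |M ε| := by
    rw [hg₁z, hg₁Bn]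
    rw [show max ε 1 * Bn / (ε * Bn) = max ε 1 / ε by
      rw [mul_comm ε Bn, ← div_div, mul_div_assoc, div_self hBn.ne', mul_one]]
  have hterm1_nonneg : 0 ≤ γ * (g₁ (ε * Bn) / (ε * g₁ Bn)) * |M ε| := by
    rw [hterm1]
    have : (0:ℝ) ≤ max ε 1 / ε := by positivity
    positivity
  have hterm1_le : γ * (g₁ (ε * Bn) / (ε * g₁ Bn)) * |M ε| ≤ max ε 1 * γ := by
    rw [hterm1]
    calc γ * (max ε 1 / ε) * |M ε| ≤ γ * (max ε 1 / ε) * ε := by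
          apply mul_le_mul_of_nonneg_left hMle
          have : (0:ℝ) ≤ max ε 1 / ε := by positivity
          positivity
      _ = max ε 1 * γ := by field_simp
  have hsup_le : sSup S ≤ max ε 1 := Real.sSup_le hSub (le_trans zero_le_one (le_max_right ε 1))
  constructor
  · linarith
  · have : max ε 1 * (γ + 1) = max ε 1 * γ + max ε 1 := by ring
    rw [this]
    exact add_le_add hterm1_le hsup_le
end
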